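/- Let θ ∈ (0, π/2). For x ≥ 0 let V(x) := lim_{z→∞} z² · ( F(x,z) − D(x,z)² ), where D and F are defined as in the directional growth model (conditional mean and second moment of the one-step slope increment). Then lim_{x→0⁺} V(x) = ( θ² + θ·sin θ·cos θ ) / (2θ²). Equivalently, the iterated limit lim_{x→0⁺} lim_{z→∞} z² · ( F(x,z) − D(x,z)² ) exists and equals ( θ² + θ·sin θ·cos θ ) / (2θ²). -/

import Mathlib

open Real Filter Set intervalIntegral

/-- The conditional expected one-step increment of the slope process in the
directional growth model. -/
noncomputable def growthDrift (θ x z : ℝ) : ℝ :=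
  (1 / (2 * θ)) *
    ((∫ α in (-(Real.arctan x))..θ, ((x * z + Real.cos α) / (z + Real.sin α) - x)) +
     (∫ α in (Real.arctan x)..θ, ((x * z - Real.cos α) / (z + Real.sin α) - x)))

/-- The conditional second moment of the one-step increment of the slope process in
the directional growth model. -/
noncomputable def growthSecondMoment (θ x z : ℝ) : ℝ :=
  (1 / (2 * θ)) *
    ((∫ α in (-(Real.arctan x))..θ, ((x * z + Real.cos α) / (z + Real.sin α) - x) ^ 2) +
     (∫ α in (Real.arctan x)..θ, ((x * z - Real.cos α) / (z + Real.sin α) - x) ^ 2))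

private lemma tendsto_inv_sub_one : Tendsto (fun z : ℝ => (z - 1)⁻¹) atTop (nhds 0) := by
  have h : Tendsto (fun z : ℝ => z - 1) atTop atTop :=
    tendsto_atTop_add_const_right atTop (-1) tendsto_id
  exact h.inv_tendsto_atTop

private lemma tendsto_of_bound (f : ℝ → ℝ) (L K : ℝ)
    (h : ∀ᶠ z in atTop, |f z - L| ≤ K / (z - 1)) :
    Tendsto f atTop (nhds L) := by
  rw [tendsto_iff_dist_tendsto_zero]
  refine squeeze_zero' (g := fun z => K / (z - 1)) (Eventually.of_forall fun z => dist_nonneg) ?_ ?_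
  · filter_upwards [h] with z hz
    simpa [Real.dist_eq] using hz
  · have := tendsto_inv_sub_one.const_mul K
    simpa [div_eq_mul_inv] using this

private lemma keyA (a b C : ℝ) (g : ℝ → ℝ) (hgc : Continuous g) (hC : ∀ α, |g α| ≤ C) :
    Tendsto (fun z => ∫ α in a..b, z * g α / (z + Real.sin α)) atTop
      (nhds (∫ α in a..b, g α)) := by
  have hC0 : 0 ≤ C := le_trans (abs_nonneg _) (hC 0)
  refine tendsto_of_bound _ _ (C * |b - a|) ?_
  filter_upwards [eventually_ge_atTop (2:ℝ)] with z hz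
  have hpos : ∀ α : ℝ, 0 < z + Real.sin α := by
    intro α; nlinarith [Real.neg_one_le_sin α]
  have hcont : Continuous fun α => z * g α / (z + Real.sin α) :=
    (continuous_const.mul hgc).div (continuous_const.add Real.continuous_sin)
      (fun α => (hpos α).ne')
  rw [← intervalIntegral.integral_sub (hcont.intervalIntegrable a b)
      (hgc.intervalIntegrable a b)]
  have hb : ∀ α ∈ Set.uIoc a b, ‖z * g α / (z + Real.sin α) - g α‖ ≤ C / (z - 1) := by
    intro α _
    have hne := (hpos α).ne'
    have heq : z * g α / (z + Real.sin α) - g α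
        = -(g α * Real.sin α) / (z + Real.sin α) := by
      field_simp; ring
    rw [Real.norm_eq_abs, heq, abs_div, abs_neg, abs_of_pos (hpos α), abs_mul]
    have hnum : |g α| * |Real.sin α| ≤ C := by
      calc |g α| * |Real.sin α| ≤ C * 1 :=
            mul_le_mul (hC α) (Real.abs_sin_le_one α) (abs_nonneg _) hC0
        _ = C := mul_one C
    have hden : z - 1 ≤ z + Real.sin α := by nlinarith [Real.neg_one_le_sin α]
    exact div_le_div₀ hC0 hnum (by linarith) hden
  calc ‖∫ α in a..b, (z * g α / (z + Real.sin α) - g α)‖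
      ≤ C / (z - 1) * |b - a| := intervalIntegral.norm_integral_le_of_norm_le_const hb
    _ = C * |b - a| / (z - 1) := by ring

private lemma keyB (a b C : ℝ) (g : ℝ → ℝ) (hgc : Continuous g) (hC : ∀ α, |g α| ≤ C) :
    Tendsto (fun z => ∫ α in a..b, (z * g α / (z + Real.sin α)) ^ 2) atTop
      (nhds (∫ α in a..b, (g α) ^ 2)) := by
  have hC0 : 0 ≤ C := le_trans (abs_nonneg _) (hC 0)
  refine tendsto_of_bound _ _ (5 * C ^ 2 * |b - a|) ?_
  filter_upwards [eventually_ge_atTop (2:ℝ)] with z hz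
  have hpos : ∀ α : ℝ, 0 < z + Real.sin α := by
    intro α; nlinarith [Real.neg_one_le_sin α]
  have hcont : Continuous fun α => (z * g α / (z + Real.sin α)) ^ 2 :=
    ((continuous_const.mul hgc).div (continuous_const.add Real.continuous_sin)
      (fun α => (hpos α).ne')).pow 2
  rw [← intervalIntegral.integral_sub (hcont.intervalIntegrable a b)
      ((show Continuous fun α => g α ^ 2 from hgc.pow 2).intervalIntegrable a b)]
  have hb : ∀ α ∈ Set.uIoc a b,
      ‖(z * g α / (z + Real.sin α)) ^ 2 - (g α) ^ 2‖ ≤ 5 * C ^ 2 / (z - 1) := by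
    intro α _
    have hne := (hpos α).ne'
    have hs1 := Real.neg_one_le_sin α
    have hs2 := Real.sin_le_one α
    have heq : (z * g α / (z + Real.sin α)) ^ 2 - (g α) ^ 2
        = -(g α ^ 2 * (2 * z * Real.sin α + Real.sin α ^ 2)) / (z + Real.sin α) ^ 2 := by
      field_simp; ring
    rw [Real.norm_eq_abs, heq, abs_div, abs_neg, abs_mul]
    have hg2 : |g α ^ 2| ≤ C ^ 2 := by
      rw [abs_pow]
      exact pow_le_pow_left₀ (abs_nonneg _) (hC α) 2
    have hnum : |2 * z * Real.sin α + Real.sin α ^ 2| ≤ 2 * z + 1 := by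
      rw [abs_le]; constructor <;> nlinarith
    have hden : (z - 1) ^ 2 ≤ |(z + Real.sin α) ^ 2| := by
      rw [abs_of_pos (by positivity)]
      nlinarith
    calc |g α ^ 2| * |2 * z * Real.sin α + Real.sin α ^ 2| / |(z + Real.sin α) ^ 2|
        ≤ C ^ 2 * (2 * z + 1) / (z - 1) ^ 2 := by
          apply div_le_div₀ (by positivity) ?_ (by nlinarith) hden
          exact mul_le_mul hg2 hnum (abs_nonneg _) (by positivity)
      _ ≤ 5 * C ^ 2 / (z - 1) := by
          rw [div_le_div_iff₀ (by nlinarith) (by linarith)]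
          have hfact : 0 ≤ C ^ 2 * ((z - 1) * (3 * z - 6)) :=
            mul_nonneg (sq_nonneg C)
              (mul_nonneg (by linarith) (by linarith))
          nlinarith [hfact]
  calc ‖∫ α in a..b, ((z * g α / (z + Real.sin α)) ^ 2 - (g α) ^ 2)‖
      ≤ 5 * C ^ 2 / (z - 1) * |b - a| :=
        intervalIntegral.norm_integral_le_of_norm_le_const hb
    _ = 5 * C ^ 2 * |b - a| / (z - 1) := by ring

private lemma integral_lin (c a b : ℝ) :
    (∫ α in a..b, (Real.cos α - c * Real.sin α))
      = (Real.sin b - Real.sin a) - c * (Real.cos a - Real.cos b) := by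
  rw [intervalIntegral.integral_sub (Real.continuous_cos.intervalIntegrable a b)
      ((show Continuous fun α => c * Real.sin α from continuous_const.mul Real.continuous_sin).intervalIntegrable a b),
    intervalIntegral.integral_const_mul, integral_cos, integral_sin]

private lemma integral_quad (c a b : ℝ) :
    (∫ α in a..b, (Real.cos α - c * Real.sin α) ^ 2)
      = ((1 + c ^ 2) / 2 * b + (1 - c ^ 2) / 4 * Real.sin (2 * b)
          + c / 2 * Real.cos (2 * b))
        - ((1 + c ^ 2) / 2 * a + (1 - c ^ 2) / 4 * Real.sin (2 * a)
          + c / 2 * Real.cos (2 * a)) := by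
  have h : ∀ α : ℝ, HasDerivAt
      (fun t => (1 + c ^ 2) / 2 * t + (1 - c ^ 2) / 4 * Real.sin (2 * t)
        + c / 2 * Real.cos (2 * t))
      ((Real.cos α - c * Real.sin α) ^ 2) α := by
    intro α
    have h2 : HasDerivAt (fun t : ℝ => 2 * t) 2 α := by
      simpa using (hasDerivAt_id α).const_mul (2:ℝ)
    have hs : HasDerivAt (fun t => Real.sin (2 * t)) (Real.cos (2 * α) * 2) α :=
      (Real.hasDerivAt_sin (2 * α)).comp α h2
    have hc : HasDerivAt (fun t => Real.cos (2 * t)) (-Real.sin (2 * α) * 2) α :=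
      (Real.hasDerivAt_cos (2 * α)).comp α h2
    have hid : HasDerivAt (fun t : ℝ => (1 + c ^ 2) / 2 * t) ((1 + c ^ 2) / 2) α := by
      simpa using (hasDerivAt_id α).const_mul ((1 + c ^ 2) / 2)
    have h' : HasDerivAt (fun t => (1 + c ^ 2) / 2 * t + (1 - c ^ 2) / 4 * Real.sin (2 * t)
        + c / 2 * Real.cos (2 * t))
        ((1 + c ^ 2) / 2 + (1 - c ^ 2) / 4 * (Real.cos (2 * α) * 2) + c / 2 * (-Real.sin (2 * α) * 2)) α :=
      (hid.add (hs.const_mul ((1 - c ^ 2) / 4))).add (hc.const_mul (c / 2))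
    convert h' using 1
    rw [Real.cos_two_mul, Real.sin_two_mul]
    have hpyt := Real.sin_sq_add_cos_sq α
    nlinarith [hpyt]
  rw [intervalIntegral.integral_eq_sub_of_hasDerivAt (fun t _ => h t)
      (((Real.continuous_cos.sub (continuous_const.mul Real.continuous_sin)).pow 2).intervalIntegrable a b)]

/-- The limiting rescaled conditional variance. -/
noncomputable def Vfun (θ x : ℝ) : ℝ :=
  (1 / (2 * θ)) *
    (((((1 + x ^ 2) / 2 * θ + (1 - x ^ 2) / 4 * Real.sin (2 * θ)
          + x / 2 * Real.cos (2 * θ))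
        - ((1 + x ^ 2) / 2 * (-(Real.arctan x)) + (1 - x ^ 2) / 4 * Real.sin (2 * (-(Real.arctan x)))
          + x / 2 * Real.cos (2 * (-(Real.arctan x))))))
      + ((((1 + (-x) ^ 2) / 2 * θ + (1 - (-x) ^ 2) / 4 * Real.sin (2 * θ)
          + (-x) / 2 * Real.cos (2 * θ))
        - ((1 + (-x) ^ 2) / 2 * (Real.arctan x) + (1 - (-x) ^ 2) / 4 * Real.sin (2 * (Real.arctan x))
          + (-x) / 2 * Real.cos (2 * (Real.arctan x))))))
  - ((1 / (2 * θ)) *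
      (((Real.sin θ - Real.sin (-(Real.arctan x))) - x * (Real.cos (-(Real.arctan x)) - Real.cos θ))
        + (-((Real.sin θ - Real.sin (Real.arctan x)) - (-x) * (Real.cos (Real.arctan x) - Real.cos θ))))) ^ 2

theorem stmt_4 (θ : ℝ) (hθ : θ ∈ Set.Ioo 0 (Real.pi / 2)) :
    ∃ V : ℝ → ℝ,
      (∀ x : ℝ, 0 ≤ x →
        Filter.Tendsto
          (fun z : ℝ => z ^ 2 * (growthSecondMoment θ x z - (growthDrift θ x z) ^ 2))
          Filter.atTop (nhds (V x))) ∧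
      Filter.Tendsto V (nhdsWithin 0 (Set.Ioi 0))
        (nhds ((θ ^ 2 + θ * Real.sin θ * Real.cos θ) / (2 * θ ^ 2))) := by
  obtain ⟨hθ0, hθ2⟩ := hθ
  refine ⟨Vfun θ, ?_, ?_⟩
  · intro x hx
    set a := Real.arctan x with ha
    set g₁ : ℝ → ℝ := fun α => Real.cos α - x * Real.sin α with hg₁
    set g₂ : ℝ → ℝ := fun α => -Real.cos α - x * Real.sin α with hg₂
    have hg₁c : Continuous g₁ := Real.continuous_cos.sub (continuous_const.mul Real.continuous_sin)
    have hg₂c : Continuous g₂ := (Real.continuous_cos.neg).sub (continuous_const.mul Real.continuous_sin)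
    have hb₁ : ∀ α, |g₁ α| ≤ 1 + x := by
      intro α
      simp only [hg₁]
      rw [abs_le]
      constructor <;>
        nlinarith [Real.neg_one_le_sin α, Real.sin_le_one α, Real.neg_one_le_cos α,
          Real.cos_le_one α]
    have hb₂ : ∀ α, |g₂ α| ≤ 1 + x := by
      intro α
      simp only [hg₂]
      rw [abs_le]
      constructor <;>
        nlinarith [Real.neg_one_le_sin α, Real.sin_le_one α, Real.neg_one_le_cos α,
          Real.cos_le_one α]
    have hA1 := keyA (-a) θ (1 + x) g₁ hg₁c hb₁
    have hA2 := keyA a θ (1 + x) g₂ hg₂c hb₂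
    have hB1 := keyB (-a) θ (1 + x) g₁ hg₁c hb₁
    have hB2 := keyB a θ (1 + x) g₂ hg₂c hb₂
    have hlim : Tendsto
        (fun z : ℝ => (1 / (2 * θ)) *
            ((∫ α in (-a)..θ, (z * g₁ α / (z + Real.sin α)) ^ 2)
              + (∫ α in a..θ, (z * g₂ α / (z + Real.sin α)) ^ 2))
          - ((1 / (2 * θ)) *
            ((∫ α in (-a)..θ, z * g₁ α / (z + Real.sin α))
              + (∫ α in a..θ, z * g₂ α / (z + Real.sin α)))) ^ 2)
        atTop
        (nhds ((1 / (2 * θ)) * ((∫ α in (-a)..θ, (g₁ α) ^ 2) + (∫ α in a..θ, (g₂ α) ^ 2))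
          - ((1 / (2 * θ)) * ((∫ α in (-a)..θ, g₁ α) + (∫ α in a..θ, g₂ α))) ^ 2)) :=
      (((hB1.add hB2).const_mul _)).sub (((hA1.add hA2).const_mul _).pow 2)
    have hval : (1 / (2 * θ)) * ((∫ α in (-a)..θ, (g₁ α) ^ 2) + (∫ α in a..θ, (g₂ α) ^ 2))
        - ((1 / (2 * θ)) * ((∫ α in (-a)..θ, g₁ α) + (∫ α in a..θ, g₂ α))) ^ 2
        = Vfun θ x := by
      have e1 : (∫ α in (-a)..θ, g₁ α)
          = (Real.sin θ - Real.sin (-a)) - x * (Real.cos (-a) - Real.cos θ) :=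
        integral_lin x (-a) θ
      have e2 : (∫ α in a..θ, g₂ α)
          = -((Real.sin θ - Real.sin a) - (-x) * (Real.cos a - Real.cos θ)) := by
        rw [show (∫ α in a..θ, g₂ α)
            = ∫ α in a..θ, -(Real.cos α - (-x) * Real.sin α) from
          intervalIntegral.integral_congr (fun α _ => by simp [hg₂]; ring),
          intervalIntegral.integral_neg, integral_lin]
      have e3 : (∫ α in (-a)..θ, (g₁ α) ^ 2)
          = ((1 + x ^ 2) / 2 * θ + (1 - x ^ 2) / 4 * Real.sin (2 * θ)
              + x / 2 * Real.cos (2 * θ))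
            - ((1 + x ^ 2) / 2 * (-a) + (1 - x ^ 2) / 4 * Real.sin (2 * (-a))
              + x / 2 * Real.cos (2 * (-a))) := integral_quad x (-a) θ
      have e4 : (∫ α in a..θ, (g₂ α) ^ 2)
          = ((1 + (-x) ^ 2) / 2 * θ + (1 - (-x) ^ 2) / 4 * Real.sin (2 * θ)
              + (-x) / 2 * Real.cos (2 * θ))
            - ((1 + (-x) ^ 2) / 2 * a + (1 - (-x) ^ 2) / 4 * Real.sin (2 * a)
              + (-x) / 2 * Real.cos (2 * a)) := by
        rw [show (∫ α in a..θ, (g₂ α) ^ 2)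
            = ∫ α in a..θ, (Real.cos α - (-x) * Real.sin α) ^ 2 from
          intervalIntegral.integral_congr (fun α _ => by simp [hg₂]; ring)]
        exact integral_quad (-x) a θ
      rw [e1, e2, e3, e4]
      simp only [Vfun, ha]
    rw [hval] at hlim
    refine hlim.congr' ?_
    filter_upwards [eventually_ge_atTop (2:ℝ)] with z hz
    have hpos : ∀ α : ℝ, 0 < z + Real.sin α := by
      intro α; nlinarith [Real.neg_one_le_sin α]
    have c1 : z * (∫ α in (-a)..θ, ((x * z + Real.cos α) / (z + Real.sin α) - x))
        = ∫ α in (-a)..θ, z * g₁ α / (z + Real.sin α) := by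
      rw [← intervalIntegral.integral_const_mul]
      refine intervalIntegral.integral_congr fun α _ => ?_
      have hne := (hpos α).ne'
      field_simp [hg₁]
      first | exact Or.inl (by ring) | ring
    have c2 : z * (∫ α in a..θ, ((x * z - Real.cos α) / (z + Real.sin α) - x))
        = ∫ α in a..θ, z * g₂ α / (z + Real.sin α) := by
      rw [← intervalIntegral.integral_const_mul]
      refine intervalIntegral.integral_congr fun α _ => ?_
      have hne := (hpos α).ne'
      field_simp [hg₂]
      first | exact Or.inl (by ring) | ring
    have c3 : z ^ 2 * (∫ α in (-a)..θ, ((x * z + Real.cos α) / (z + Real.sin α) - x) ^ 2)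
        = ∫ α in (-a)..θ, (z * g₁ α / (z + Real.sin α)) ^ 2 := by
      rw [← intervalIntegral.integral_const_mul]
      refine intervalIntegral.integral_congr fun α _ => ?_
      have hne := (hpos α).ne'
      field_simp [hg₁]
      first | exact Or.inl (by ring) | ring
    have c4 : z ^ 2 * (∫ α in a..θ, ((x * z - Real.cos α) / (z + Real.sin α) - x) ^ 2)
        = ∫ α in a..θ, (z * g₂ α / (z + Real.sin α)) ^ 2 := by
      rw [← intervalIntegral.integral_const_mul]
      refine intervalIntegral.integral_congr fun α _ => ?_
      have hne := (hpos α).ne'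
      field_simp [hg₂]
      first | exact Or.inl (by ring) | ring
    simp only [growthSecondMoment, growthDrift]
    rw [← c1, ← c2, ← c3, ← c4]
    ring
  · have hc : Continuous (Vfun θ) := by
      unfold Vfun
      have h := Real.continuous_arctan
      fun_prop
    have h0 : Vfun θ 0 = (θ ^ 2 + θ * Real.sin θ * Real.cos θ) / (2 * θ ^ 2) := by
      have hθ0' : θ ≠ 0 := ne_of_gt hθ0
      simp only [Vfun, Real.arctan_zero, neg_zero, mul_zero, Real.sin_zero, Real.cos_zero,
        Real.sin_two_mul]
      field_simp
      ring
    have := (hc.tendsto 0).mono_left (nhdsWithin_le_nhds (s := Set.Ioi (0:ℝ)))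
    rwa [h0] at this
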